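/- arXiv:1807.03826 — 3 statements merged into one kernel-verified Lean document; each statement's English description precedes it below -/
import Mathlib

section
/- Let 𝒜 be a bounded linear operator acting on BUC(ℝ,X) that commutes with the translation operator S. Then σ(𝒜g) ⊂ σ(g) for every g ∈ BUC(ℝ,X). -/
open Set MeasureTheory intervalIntegral
open scoped BoundedContinuousFunction ZeroAtInfty

noncomputable section

/-- The translation operator `S` on `BC(ℝ, X)`: `(S g)(t) = g (t + 1)`.
It is an invertible isometry of the space of bounded continuous functions. -/
def transOp (X : Type*) [NormedAddCommGroup X] [NormedSpace ℂ X] :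
    (ℝ →ᵇ X) →L[ℂ] (ℝ →ᵇ X) :=
  LinearMap.mkContinuous
    { toFun := fun g => g.compContinuous ⟨fun t : ℝ => t + 1, by continuity⟩
      map_add' := by intro g h; ext t; simp
      map_smul' := by intro c g; ext t; simp }
    1 (fun g => by
      simpa using g.norm_compContinuous_le ⟨fun t : ℝ => t + 1, by continuity⟩)

/-- The circular spectrum of `g ∈ BC(ℝ, X)`: the set of points `ξ₀` of the unit circle
`Γ = {z : ‖z‖ = 1}` such that the analytic function `λ ↦ R(λ, S) g` on `ℂ \ Γ`
admits no analytic extension to any neighborhood of `ξ₀`. -/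
def circularSpectrum {X : Type*} [NormedAddCommGroup X] [NormedSpace ℂ X]
    (g : ℝ →ᵇ X) : Set ℂ :=
  {ξ : ℂ | ‖ξ‖ = 1 ∧
    ¬ ∃ U : Set ℂ, IsOpen U ∧ ξ ∈ U ∧ ∃ H : ℂ → (ℝ →ᵇ X),
      AnalyticOnNhd ℂ H U ∧ ∀ z ∈ U, ‖z‖ ≠ 1 → H z = resolvent (transOp X) z g}

/-- The subspace `BUC(ℝ, X)` of bounded uniformly continuous functions, as a submodule
of `BC(ℝ, X)`. -/
def BUCsub (X : Type*) [NormedAddCommGroup X] [NormedSpace ℂ X] :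
    Submodule ℂ (ℝ →ᵇ X) where
  carrier := {g : ℝ →ᵇ X | UniformContinuous ⇑g}
  add_mem' := by
    intro g h hg hh
    rw [Set.mem_ofPred_eq, BoundedContinuousFunction.coe_add]
    exact hg.add hh
  zero_mem' := by
    rw [Set.mem_ofPred_eq, BoundedContinuousFunction.coe_zero]
    exact uniformContinuous_const
  smul_mem' := by
    intro c g hg
    rw [Set.mem_ofPred_eq, BoundedContinuousFunction.coe_smul]
    exact hg.const_smul c

/-- The inverse translation operator: `(S⁻¹ g)(t) = g (t - 1)`. -/
def transOpInv (X : Type*) [NormedAddCommGroup X] [NormedSpace ℂ X] :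
    (ℝ →ᵇ X) →L[ℂ] (ℝ →ᵇ X) :=
  LinearMap.mkContinuous
    { toFun := fun g => g.compContinuous ⟨fun t : ℝ => t - 1, by continuity⟩
      map_add' := by intro g h; ext t; simp
      map_smul' := by intro c g; ext t; simp }
    1 (fun g => by
      simpa using g.norm_compContinuous_le ⟨fun t : ℝ => t - 1, by continuity⟩)

section Aux

variable {X : Type*} [NormedAddCommGroup X] [NormedSpace ℂ X]

lemma transOp_apply (g : ℝ →ᵇ X) (t : ℝ) : transOp X g t = g (t + 1) := rfl

lemma transOpInv_apply (g : ℝ →ᵇ X) (t : ℝ) : transOpInv X g t = g (t - 1) := rfl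

lemma transOp_mul_inv : transOp X * transOpInv X = 1 := by
  ext g t
  simp [ContinuousLinearMap.mul_apply, transOp_apply, transOpInv_apply]

lemma transOp_inv_mul : transOpInv X * transOp X = 1 := by
  ext g t
  simp [ContinuousLinearMap.mul_apply, transOp_apply, transOpInv_apply]

lemma norm_transOp_le : ‖transOp X‖ ≤ 1 :=
  LinearMap.mkContinuous_norm_le _ zero_le_one _

lemma norm_transOpInv_le : ‖transOpInv X‖ ≤ 1 :=
  LinearMap.mkContinuous_norm_le _ zero_le_one _

/-- If `T` is invertible with `‖T‖ ≤ 1` and `‖T⁻¹‖ ≤ 1`, then `z - T` is invertible off the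
unit circle. -/
lemma isUnit_smul_sub {A : Type*} [NormedRing A] [NormedAlgebra ℂ A] [CompleteSpace A]
    (T T' : A) (h1 : T * T' = 1) (h2 : T' * T = 1) (hT : ‖T‖ ≤ 1) (hT' : ‖T'‖ ≤ 1)
    {z : ℂ} (hz : ‖z‖ ≠ 1) : IsUnit (z • (1 : A) - T) := by
  rcases lt_or_gt_of_ne hz with h | h
  · have key : z • (1 : A) - T = -(T * (1 - z • T')) := by
      rw [mul_sub, mul_one, mul_smul_comm, h1, neg_sub]
    rw [key]
    have hnorm : ‖z • T'‖ < 1 := by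
      calc ‖z • T'‖ = ‖z‖ * ‖T'‖ := norm_smul _ _
        _ ≤ ‖z‖ * 1 := by gcongr
        _ < 1 := by simpa using h
    have hu : IsUnit (1 - z • T') := isUnit_one_sub_of_norm_lt_one hnorm
    have hTu : IsUnit T := ⟨⟨T, T', h1, h2⟩, rfl⟩
    exact (hTu.mul hu).neg
  · have hz0 : z ≠ 0 := by
      rintro rfl; simp at h; linarith
    have key : z • (1 : A) - T = (z • (1 : A)) * (1 - z⁻¹ • T) := by
      rw [mul_sub, mul_one, smul_mul_assoc, one_mul, smul_smul, mul_inv_cancel₀ hz0, one_smul]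
    rw [key]
    have hnorm : ‖z⁻¹ • T‖ < 1 := by
      calc ‖z⁻¹ • T‖ = ‖z‖⁻¹ * ‖T‖ := by rw [norm_smul, norm_inv]
        _ ≤ ‖z‖⁻¹ * 1 := by gcongr
        _ < 1 := by
            rw [mul_one]
            exact inv_lt_one_of_one_lt₀ h
    have hzu : IsUnit (z • (1 : A)) := by
      have := hz0.isUnit.map (algebraMap ℂ A)
      rwa [Algebra.algebraMap_eq_smul_one] at this
    exact hzu.mul (isUnit_one_sub_of_norm_lt_one hnorm)

lemma isClosed_BUCsub : IsClosed ((BUCsub X : Set (ℝ →ᵇ X))) := by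
  refine IsSeqClosed.isClosed ?_
  intro f g hf hfg
  show UniformContinuous ⇑g
  rw [Metric.uniformContinuous_iff]
  intro ε hε
  obtain ⟨N, hN⟩ := (Metric.tendsto_atTop.1 hfg) (ε / 3) (by positivity)
  have hdist : dist (f N) g < ε / 3 := hN N le_rfl
  have hUC : UniformContinuous ⇑(f N) := hf N
  obtain ⟨δ, hδ, H⟩ := Metric.uniformContinuous_iff.1 hUC (ε / 3) (by positivity)
  refine ⟨δ, hδ, fun {a b} hab => ?_⟩
  have h1 : dist (g a) (f N a) ≤ dist (f N) g := by
    rw [dist_comm]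
    exact BoundedContinuousFunction.dist_coe_le_dist a
  have h2 : dist (f N b) (g b) ≤ dist (f N) g :=
    BoundedContinuousFunction.dist_coe_le_dist b
  calc dist (g a) (g b)
      ≤ dist (g a) (f N a) + dist (f N a) (f N b) + dist (f N b) (g b) := dist_triangle4 _ _ _ _
    _ < ε / 3 + ε / 3 + ε / 3 := by
        have := H hab
        gcongr <;> linarith
    _ = ε := by ring

lemma mem_BUCsub_of_hasDerivAt {f : ℂ → (ℝ →ᵇ X)} {z : ℂ} {d : ℝ →ᵇ X}
    (hf : HasDerivAt f d z) (hmem : ∀ᶠ w in nhds z, f w ∈ BUCsub X) : d ∈ BUCsub X := by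
  have htend := hasDerivAt_iff_tendsto_slope.1 hf
  have hz : f z ∈ BUCsub X := hmem.self_of_nhds
  refine isClosed_BUCsub.mem_of_tendsto htend ?_
  filter_upwards [nhdsWithin_le_nhds hmem] with w hw
  exact Submodule.smul_mem _ _ (Submodule.sub_mem _ hw hz)

lemma hasDerivAt_subtype {p : Submodule ℂ (ℝ →ᵇ X)} {f : ℂ → (ℝ →ᵇ X)} {K : ℂ → p}
    {z : ℂ} {d : p} (hK : ∀ᶠ w in nhds z, ↑(K w) = f w) (hf : HasDerivAt f ↑d z) :
    HasDerivAt K d z := by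
  rw [hasDerivAt_iff_isLittleO] at hf ⊢
  rw [Asymptotics.isLittleO_iff] at hf ⊢
  intro c hc
  have hKz : ↑(K z) = f z := hK.self_of_nhds
  filter_upwards [hf hc, hK] with w h1 h2
  have : ‖K w - K z - (w - z) • d‖ = ‖f w - f z - (w - z) • (d : ℝ →ᵇ X)‖ := by
    rw [← Submodule.norm_coe]
    push_cast
    rw [h2, hKz]
  rw [this]
  exact h1

lemma transOpInv_mem (g : BUCsub X) : transOpInv X ↑g ∈ BUCsub X := by
  have hg : UniformContinuous ⇑(g : ℝ →ᵇ X) := g.2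
  show UniformContinuous ⇑(transOpInv X (g : ℝ →ᵇ X))
  have heq : ⇑(transOpInv X (g : ℝ →ᵇ X)) = ⇑(g : ℝ →ᵇ X) ∘ (fun t : ℝ => t - 1) := rfl
  rw [heq]
  exact hg.comp (uniformContinuous_id.sub uniformContinuous_const)

/-- The inverse translation operator restricted to `BUC(ℝ, X)`. -/
def SBinv (X : Type*) [NormedAddCommGroup X] [NormedSpace ℂ X] :
    BUCsub X →L[ℂ] BUCsub X :=
  LinearMap.mkContinuous
    { toFun := fun g => ⟨transOpInv X ↑g, transOpInv_mem g⟩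
      map_add' := by intro g h; apply Subtype.ext; push_cast; simp [map_add]
      map_smul' := by intro c g; apply Subtype.ext; push_cast; simp [_root_.map_smul] }
    1 (fun g => by
      show ‖transOpInv X (g : ℝ →ᵇ X)‖ ≤ 1 * ‖g‖
      rw [one_mul, ← Submodule.norm_coe g]
      calc ‖transOpInv X (g : ℝ →ᵇ X)‖ ≤ ‖transOpInv X‖ * ‖(g : ℝ →ᵇ X)‖ :=
            (transOpInv X).le_opNorm _
        _ ≤ 1 * ‖(g : ℝ →ᵇ X)‖ := by gcongr; exact norm_transOpInv_le
        _ = ‖(g : ℝ →ᵇ X)‖ := one_mul _)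

lemma SBinv_coe (g : BUCsub X) : ((SBinv X g : BUCsub X) : ℝ →ᵇ X) = transOpInv X ↑g := rfl

end Aux

set_option maxHeartbeats 1000000 in
/-- For a bounded linear operator `𝒜` on `BUC(ℝ, X)` commuting with the translation
operator `S`, one has `σ(𝒜 g) ⊆ σ(g)` for all `g ∈ BUC(ℝ, X)`. -/
theorem circularSpectrum_comm_operator_subset {X : Type*} [NormedAddCommGroup X] [NormedSpace ℂ X] [CompleteSpace X]
    (A : BUCsub X →L[ℂ] BUCsub X) (SB : BUCsub X →L[ℂ] BUCsub X)
    (hSB : ∀ g : BUCsub X, (SB g : ℝ →ᵇ X) = transOp X (g : ℝ →ᵇ X))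
    (hcomm : A.comp SB = SB.comp A) :
    ∀ g : BUCsub X, circularSpectrum ((A g : ℝ →ᵇ X)) ⊆ circularSpectrum (g : ℝ →ᵇ X) := by
  classical
  intro g ξ hξ
  obtain ⟨hξ1, hξ2⟩ := hξ
  refine ⟨hξ1, ?_⟩
  rintro ⟨U, hUopen, hξU, H, hHa, hHres⟩
  apply hξ2
  haveI : CompleteSpace (BUCsub X) := isClosed_BUCsub.completeSpace_coe
  -- invertibility of `z - S` on `BC` and on `BUC`
  have huT : ∀ z : ℂ, ‖z‖ ≠ 1 →
      IsUnit (algebraMap ℂ ((ℝ →ᵇ X) →L[ℂ] (ℝ →ᵇ X)) z - transOp X) := by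
    intro z hz
    rw [Algebra.algebraMap_eq_smul_one]
    exact isUnit_smul_sub (transOp X) (transOpInv X) transOp_mul_inv transOp_inv_mul norm_transOp_le
      norm_transOpInv_le hz
  have hSB1 : SB * SBinv X = 1 := by
    refine ContinuousLinearMap.ext fun x => Subtype.ext ?_
    show ((SB (SBinv X x) : BUCsub X) : ℝ →ᵇ X) = ((x : BUCsub X) : ℝ →ᵇ X)
    rw [hSB, SBinv_coe]
    have := congrArg (fun L : (ℝ →ᵇ X) →L[ℂ] (ℝ →ᵇ X) => L (x : ℝ →ᵇ X)) transOp_mul_inv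
    simpa [ContinuousLinearMap.mul_apply] using this
  have hSB2 : SBinv X * SB = 1 := by
    refine ContinuousLinearMap.ext fun x => Subtype.ext ?_
    show ((SBinv X (SB x) : BUCsub X) : ℝ →ᵇ X) = ((x : BUCsub X) : ℝ →ᵇ X)
    rw [SBinv_coe, hSB]
    have := congrArg (fun L : (ℝ →ᵇ X) →L[ℂ] (ℝ →ᵇ X) => L (x : ℝ →ᵇ X)) transOp_inv_mul
    simpa [ContinuousLinearMap.mul_apply] using this
  have hSBnorm : ‖SB‖ ≤ 1 := by
    refine ContinuousLinearMap.opNorm_le_bound _ zero_le_one (fun x => ?_)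
    rw [one_mul, ← Submodule.norm_coe, hSB, ← Submodule.norm_coe x]
    calc ‖transOp X (x : ℝ →ᵇ X)‖ ≤ ‖transOp X‖ * ‖(x : ℝ →ᵇ X)‖ := (transOp X).le_opNorm _
      _ ≤ 1 * ‖(x : ℝ →ᵇ X)‖ := by gcongr; exact norm_transOp_le
      _ = ‖(x : ℝ →ᵇ X)‖ := one_mul _
  have hSBinvnorm : ‖SBinv X‖ ≤ 1 := LinearMap.mkContinuous_norm_le _ zero_le_one _
  have huS : ∀ z : ℂ, ‖z‖ ≠ 1 →
      IsUnit (@algebraMap ℂ (BUCsub X →L[ℂ] BUCsub X) _ ContinuousLinearMap.semiring _ z - SB) := by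
    intro z hz
    rw [Algebra.algebraMap_eq_smul_one]
    exact isUnit_smul_sub SB (SBinv X) hSB1 hSB2 hSBnorm hSBinvnorm hz
  -- intertwining
  have hinter : ∀ (z : ℂ), ‖z‖ ≠ 1 → ∀ x : BUCsub X,
      ((Ring.inverse (@algebraMap ℂ (BUCsub X →L[ℂ] BUCsub X) _ ContinuousLinearMap.semiring _ z - SB) x : BUCsub X) : ℝ →ᵇ X)
        = Ring.inverse (algebraMap ℂ ((ℝ →ᵇ X) →L[ℂ] (ℝ →ᵇ X)) z - transOp X) (x : ℝ →ᵇ X) := by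
    intro z hz x
    set u := algebraMap ℂ ((ℝ →ᵇ X) →L[ℂ] (ℝ →ᵇ X)) z - transOp X with hu
    set v := @algebraMap ℂ (BUCsub X →L[ℂ] BUCsub X) _ ContinuousLinearMap.semiring _ z - SB with hv
    have hJ : ∀ y : BUCsub X, ((v y : BUCsub X) : ℝ →ᵇ X) = u (y : ℝ →ᵇ X) := by
      intro y
      rw [hu, hv]
      rw [Algebra.algebraMap_eq_smul_one, Algebra.algebraMap_eq_smul_one]
      push_cast
      simp [ContinuousLinearMap.sub_apply, ContinuousLinearMap.smul_apply,
        ContinuousLinearMap.one_apply, hSB]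
    have e1 : v (Ring.inverse v x) = x := by
      have := congrArg (fun L : BUCsub X →L[ℂ] BUCsub X => L x) (Ring.mul_inverse_cancel v (huS z hz))
      simpa [ContinuousLinearMap.mul_apply] using this
    have e2 : ∀ y : ℝ →ᵇ X, Ring.inverse u (u y) = y := by
      intro y
      have := congrArg (fun L : (ℝ →ᵇ X) →L[ℂ] (ℝ →ᵇ X) => L y) (Ring.inverse_mul_cancel u (huT z hz))
      simpa [ContinuousLinearMap.mul_apply] using this
    calc ((Ring.inverse v x : BUCsub X) : ℝ →ᵇ X)
        = Ring.inverse u (u ((Ring.inverse v x : BUCsub X) : ℝ →ᵇ X)) := (e2 _).symm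
      _ = Ring.inverse u ((v (Ring.inverse v x) : ℝ →ᵇ X)) := by rw [hJ]
      _ = Ring.inverse u (x : ℝ →ᵇ X) := by rw [e1]
  -- `A` commutes with the resolvent of `SB`
  have hAinv : ∀ z : ℂ, ‖z‖ ≠ 1 →
      A * Ring.inverse (@algebraMap ℂ (BUCsub X →L[ℂ] BUCsub X) _ ContinuousLinearMap.semiring _ z - SB)
        = Ring.inverse (@algebraMap ℂ (BUCsub X →L[ℂ] BUCsub X) _ ContinuousLinearMap.semiring _ z - SB) * A := by
    intro z hz
    have hASx : ∀ x : BUCsub X, A (SB x) = SB (A x) := fun x => by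
      have := congrArg (fun T : BUCsub X →L[ℂ] BUCsub X => T x) hcomm
      simpa using this
    have hC : A * (@algebraMap ℂ (BUCsub X →L[ℂ] BUCsub X) _ ContinuousLinearMap.semiring _ z - SB)
        = (@algebraMap ℂ (BUCsub X →L[ℂ] BUCsub X) _ ContinuousLinearMap.semiring _ z - SB) * A := by
      refine ContinuousLinearMap.ext fun x => ?_
      simp [ContinuousLinearMap.mul_apply, ContinuousLinearMap.sub_apply, map_sub,
        Algebra.algebraMap_eq_smul_one, ContinuousLinearMap.smul_apply,
        ContinuousLinearMap.one_apply, _root_.map_smul, hASx]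
    obtain ⟨vu, hvu⟩ := huS z hz
    rw [← hvu, Ring.inverse_unit]
    have hCu : Commute A (vu : BUCsub X →L[ℂ] BUCsub X) := by rw [hvu]; exact hC
    exact hCu.units_inv_right.eq
  -- values of resolvents lie in `BUC`
  have hmemres : ∀ z : ℂ, ‖z‖ ≠ 1 → ∀ x : BUCsub X,
      resolvent (transOp X) z (x : ℝ →ᵇ X) ∈ BUCsub X := by
    intro z hz x
    show Ring.inverse (algebraMap ℂ ((ℝ →ᵇ X) →L[ℂ] (ℝ →ᵇ X)) z - transOp X) (x : ℝ →ᵇ X)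
      ∈ BUCsub X
    rw [← hinter z hz x]
    exact SetLike.coe_mem _
  have hmemU : ∀ z ∈ U, H z ∈ BUCsub X := by
    intro z hzU
    by_cases hz : ‖z‖ = 1
    · have hseq1 : Filter.Tendsto (fun n : ℕ => (1 : ℝ) + ((n : ℝ) + 1)⁻¹) Filter.atTop (nhds 1) := by
        have := tendsto_one_div_add_atTop_nhds_zero_nat (𝕜 := ℝ)
        simp only [one_div] at this
        simpa using tendsto_const_nhds.add this
      have hseq2 : Filter.Tendsto (fun n : ℕ => (((1 : ℝ) + ((n : ℝ) + 1)⁻¹ : ℝ) : ℂ)) Filter.atTop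
          (nhds ((1 : ℝ) : ℂ)) := (Complex.continuous_ofReal.tendsto 1).comp hseq1
      have hseq : Filter.Tendsto (fun n : ℕ => (((1 : ℝ) + ((n : ℝ) + 1)⁻¹ : ℝ) : ℂ) * z) Filter.atTop
          (nhds z) := by
        simpa using hseq2.mul_const z
      have hH_tend : Filter.Tendsto (fun n : ℕ => H ((((1 : ℝ) + ((n : ℝ) + 1)⁻¹ : ℝ) : ℂ) * z))
          Filter.atTop (nhds (H z)) := ((hHa z hzU).continuousAt.tendsto).comp hseq
      refine isClosed_BUCsub.mem_of_tendsto hH_tend ?_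
      have hUev : ∀ᶠ n : ℕ in Filter.atTop,
          (((1 : ℝ) + ((n : ℝ) + 1)⁻¹ : ℝ) : ℂ) * z ∈ U := hseq (hUopen.mem_nhds hzU)
      filter_upwards [hUev] with n hn
      have hnorm : ‖(((1 : ℝ) + ((n : ℝ) + 1)⁻¹ : ℝ) : ℂ) * z‖ ≠ 1 := by
        have hpos : (0 : ℝ) < ((n : ℝ) + 1)⁻¹ := by positivity
        have heq : ‖(((1 : ℝ) + ((n : ℝ) + 1)⁻¹ : ℝ) : ℂ) * z‖ = 1 + ((n : ℝ) + 1)⁻¹ := by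
          rw [norm_mul, hz, mul_one, Complex.norm_real, Real.norm_eq_abs,
            abs_of_pos (by linarith)]
        rw [heq]
        exact ne_of_gt (by linarith)
      rw [hHres _ hn hnorm]
      exact hmemres _ hnorm g
    · rw [hHres z hzU hz]
      exact hmemres z hz g
  -- corestriction of `H` to `BUC`
  set K : ℂ → BUCsub X := fun w => if h : H w ∈ BUCsub X then (⟨H w, h⟩ : BUCsub X) else 0
    with hKdef
  have hKcoe : ∀ w ∈ U, ((K w : BUCsub X) : ℝ →ᵇ X) = H w := by
    intro w hw
    simp [hKdef, hmemU w hw]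
  have hKdiff : DifferentiableOn ℂ K U := by
    intro w hw
    have hw' : U ∈ nhds w := hUopen.mem_nhds hw
    have hHd : HasDerivAt H (deriv H w) w := ((hHa w hw).differentiableAt).hasDerivAt
    have hmemnb : ∀ᶠ v in nhds w, H v ∈ BUCsub X := by
      filter_upwards [hw'] with v hv
      exact hmemU v hv
    have hd : deriv H w ∈ BUCsub X := mem_BUCsub_of_hasDerivAt hHd hmemnb
    have hKev : ∀ᶠ v in nhds w, ((K v : BUCsub X) : ℝ →ᵇ X) = H v := by
      filter_upwards [hw'] with v hv
      exact hKcoe v hv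
    exact ((hasDerivAt_subtype (d := ⟨deriv H w, hd⟩) hKev hHd).differentiableAt).differentiableWithinAt
  have hKanalytic : AnalyticOnNhd ℂ K U := hKdiff.analyticOnNhd hUopen
  set L : BUCsub X →L[ℂ] (ℝ →ᵇ X) := (BUCsub X).subtypeL.comp A with hLdef
  refine ⟨U, hUopen, hξU, fun w => L (K w), ?_, ?_⟩
  · exact L.comp_analyticOnNhd hKanalytic
  · intro w hwU hw
    have hK_eq : K w = Ring.inverse (@algebraMap ℂ (BUCsub X →L[ℂ] BUCsub X) _ ContinuousLinearMap.semiring _ w - SB) g := by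
      apply Subtype.coe_injective
      show ((K w : BUCsub X) : ℝ →ᵇ X) = _
      rw [hKcoe w hwU, hHres w hwU hw]
      exact (hinter w hw g).symm
    have hAcomm : A (Ring.inverse (@algebraMap ℂ (BUCsub X →L[ℂ] BUCsub X) _ ContinuousLinearMap.semiring _ w - SB) g)
        = Ring.inverse (@algebraMap ℂ (BUCsub X →L[ℂ] BUCsub X) _ ContinuousLinearMap.semiring _ w - SB) (A g) := by
      have := congrArg (fun T : BUCsub X →L[ℂ] BUCsub X => T g) (hAinv w hw)
      simpa [ContinuousLinearMap.mul_apply] using this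
    show L (K w) = resolvent (transOp X) w ((A g : BUCsub X) : ℝ →ᵇ X)
    rw [hLdef, hK_eq]
    simp only [ContinuousLinearMap.comp_apply, Submodule.subtypeL_apply]
    rw [hAcomm]
    exact hinter w hw (A g)
end
end

section
/- Let (U(t,s))_{t≥s} be a 1-periodic evolutionary process on a complex Banach space X with monodromy operators M(t) = U(t,t−1) and M = M(0). If λ ∈ ρ(M) and λ ≠ 0, then λ ∈ ρ(M(t)) for every t ∈ ℝ and the resolvent is strongly continuous in t: for every x ∈ X the map t ↦ R(λ, M(t))x = (λI − M(t))⁻¹x is continuous on ℝ. -/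
open Set MeasureTheory intervalIntegral
open scoped BoundedContinuousFunction ZeroAtInfty

noncomputable section

/-- `U` is an evolutionary process on `X` with bound `‖U(t,s)‖ ≤ N e^{ω (t-s)}`. -/
def IsEvolutionaryProcess {X : Type*} [NormedAddCommGroup X] [NormedSpace ℂ X]
    (U : ℝ → ℝ → (X →L[ℂ] X)) (N ω : ℝ) : Prop :=
  (∀ t : ℝ, U t t = 1) ∧
  (∀ t s r : ℝ, r ≤ s → s ≤ t → (U t s).comp (U s r) = U t r) ∧
  (∀ x : X, ContinuousOn (fun p : ℝ × ℝ => U p.1 p.2 x) {p : ℝ × ℝ | p.2 ≤ p.1}) ∧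
  0 < N ∧ 0 < ω ∧ (∀ t s : ℝ, s ≤ t → ‖U t s‖ ≤ N * Real.exp (ω * (t - s)))

/-- The evolutionary process `U` is `1`-periodic: `U(t+1, s+1) = U(t, s)`. -/
def IsOnePeriodicProcess {X : Type*} [NormedAddCommGroup X] [NormedSpace ℂ X]
    (U : ℝ → ℝ → (X →L[ℂ] X)) : Prop :=
  ∀ t s : ℝ, s ≤ t → U (t + 1) (s + 1) = U t s

section Auxiliary

open Filter Topology

/-- Auxiliary algebraic fact: if `λ - BA` is invertible and `λ ≠ 0`, then `λ - AB` is
invertible with inverse `λ⁻¹ (1 + A (λ - BA)⁻¹ B)`. -/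
lemma aux_isUnit_and_inverse {R : Type*} [Ring R] [Algebra ℂ R] {lam : ℂ} (hlam0 : lam ≠ 0)
    {A B : R} (h : IsUnit (algebraMap ℂ R lam - B * A)) :
    IsUnit (algebraMap ℂ R lam - A * B) ∧
    Ring.inverse (algebraMap ℂ R lam - A * B)
      = lam⁻¹ • (1 + A * (Ring.inverse (algebraMap ℂ R lam - B * A)) * B) := by
  set μ : R := algebraMap ℂ R lam with hμ
  set C : R := Ring.inverse (μ - B * A) with hC
  have hc1 : (μ - B * A) * C = 1 := Ring.mul_inverse_cancel _ h
  have hc2 : C * (μ - B * A) = 1 := Ring.inverse_mul_cancel _ h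
  have hμ1 : μ = lam • (1 : R) := Algebra.algebraMap_eq_smul_one lam
  have hc1' : lam • C = 1 + B * (A * C) := by
    rw [hμ1, sub_mul, smul_mul_assoc, one_mul, sub_eq_iff_eq_add] at hc1
    rw [hc1, mul_assoc]
  have hc2' : lam • C = 1 + C * (B * A) := by
    rw [hμ1, mul_sub, mul_smul_comm, mul_one, sub_eq_iff_eq_add] at hc2
    rw [hc2]
  have key1 : (μ - A * B) * (1 + A * C * B) = μ := by
    rw [hμ1]
    calc (lam • (1:R) - A * B) * (1 + A * C * B)
        = lam • (1:R) + A * ((lam • C) * B) - (A * B + A * (B * (A * (C * B)))) := by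
          simp only [sub_mul, mul_add, add_mul, mul_one, one_mul, smul_mul_assoc,
            mul_smul_comm, smul_add, smul_sub, mul_assoc]
          abel
      _ = lam • (1:R) := by
          rw [hc1']
          simp only [add_mul, one_mul, mul_add, mul_assoc]
          abel
  have key2 : (1 + A * C * B) * (μ - A * B) = μ := by
    rw [hμ1]
    calc (1 + A * C * B) * (lam • (1:R) - A * B)
        = lam • (1:R) + A * ((lam • C) * B) - (A * B + A * (C * (B * (A * B)))) := by
          simp only [sub_mul, mul_sub, mul_add, add_mul, mul_one, one_mul, smul_mul_assoc,
            mul_smul_comm, smul_add, smul_sub, mul_assoc]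
      _ = lam • (1:R) := by
          rw [hc2']
          simp only [add_mul, one_mul, mul_add, mul_assoc]
          abel
  set w : R := lam⁻¹ • (1 + A * C * B) with hw
  have h1 : (μ - A * B) * w = 1 := by
    rw [hw, mul_smul_comm, key1, hμ1, smul_smul, inv_mul_cancel₀ hlam0, one_smul]
  have h2 : w * (μ - A * B) = 1 := by
    rw [hw, smul_mul_assoc, key2, hμ1, smul_smul, inv_mul_cancel₀ hlam0, one_smul]
  refine ⟨⟨⟨μ - A * B, w, h1, h2⟩, rfl⟩, ?_⟩
  have := Ring.inverse_unit (⟨μ - A * B, w, h1, h2⟩ : Rˣ)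
  simpa using this

variable {X : Type*} [NormedAddCommGroup X] [NormedSpace ℂ X]
variable {U : ℝ → ℝ → (X →L[ℂ] X)} {N ω : ℝ}

/-- Integer-shift invariance of a `1`-periodic process. -/
lemma aux_shift_int (hper : IsOnePeriodicProcess U) (n : ℤ) (t s : ℝ) (hst : s ≤ t) :
    U (t + n) (s + n) = U t s := by
  induction n using Int.induction_on with
  | zero => simp
  | succ k ih =>
    have h := hper (t + k) (s + k) (by linarith)
    push_cast
    rw [show t + ((k : ℝ) + 1) = (t + k) + 1 by ring, show s + ((k : ℝ) + 1) = (s + k) + 1 by ring,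
      h]
    push_cast at ih
    exact ih
  | pred k ih =>
    push_cast
    have h := hper (t + (-(k : ℝ) - 1)) (s + (-(k : ℝ) - 1)) (by linarith)
    rw [show t + (-(k:ℝ) - 1) + 1 = t + -(k:ℝ) by ring,
      show s + (-(k:ℝ) - 1) + 1 = s + -(k:ℝ) by ring] at h
    push_cast at ih
    exact h.symm.trans ih

/-- Strong continuity of the process applied to a continuously varying vector. -/
lemma aux_strong_cont (hU : IsEvolutionaryProcess U N ω)
    {S : Set ℝ} {g h : ℝ → ℝ} {f : ℝ → X}
    (hg : ContinuousOn g S) (hh : ContinuousOn h S) (hf : ContinuousOn f S)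
    (hle : ∀ t ∈ S, h t ≤ g t) :
    ContinuousOn (fun t => U (g t) (h t) (f t)) S := by
  intro t₀ ht₀
  have hmap : MapsTo (fun t => (g t, h t)) S {p : ℝ × ℝ | p.2 ≤ p.1} := fun t ht => hle t ht
  have h2 : ContinuousWithinAt (fun t => U (g t) (h t) (f t₀)) S t₀ :=
    ContinuousWithinAt.comp (g := fun p : ℝ × ℝ => U p.1 p.2 (f t₀))
      (f := fun t => (g t, h t)) (hU.2.2.1 (f t₀) _ (hmap ht₀))
      ((hg t₀ ht₀).prodMk (hh t₀ ht₀)) hmap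
  have hfz : Tendsto (fun t => ‖f t - f t₀‖) (𝓝[S] t₀) (𝓝 0) := by
    have h0 : ContinuousWithinAt (fun t => f t - f t₀) S t₀ :=
      (hf t₀ ht₀).sub continuousWithinAt_const
    simpa using h0.norm.tendsto
  have hexp : Tendsto (fun t => N * Real.exp (ω * (g t - h t))) (𝓝[S] t₀)
      (𝓝 (N * Real.exp (ω * (g t₀ - h t₀)))) := by
    refine tendsto_const_nhds.mul ((Real.continuous_exp.tendsto _).comp ?_)
    exact tendsto_const_nhds.mul ((hg t₀ ht₀).sub (hh t₀ ht₀))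
  have h1 : Tendsto (fun t => U (g t) (h t) (f t - f t₀)) (𝓝[S] t₀) (𝓝 0) := by
    have hb := hexp.mul hfz
    rw [mul_zero] at hb
    apply squeeze_zero_norm' ?_ hb
    filter_upwards [self_mem_nhdsWithin] with t ht
    calc ‖U (g t) (h t) (f t - f t₀)‖ ≤ ‖U (g t) (h t)‖ * ‖f t - f t₀‖ :=
          (U (g t) (h t)).le_opNorm _
      _ ≤ N * Real.exp (ω * (g t - h t)) * ‖f t - f t₀‖ :=
          mul_le_mul_of_nonneg_right (hU.2.2.2.2.2 _ _ (hle t ht)) (norm_nonneg _)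
  have hsum := h1.add h2
  rw [zero_add] at hsum
  exact hsum.congr (fun t => by simp [map_sub])

/-- The key formula: for `t ∈ [n, n+1]` with `n : ℤ`, `λ - M(t)` is invertible and
`R(λ, M(t)) = λ⁻¹ (1 + U(t,n) R(λ, M) U(n, t-1))`. -/
lemma aux_formula [CompleteSpace X] (hU : IsEvolutionaryProcess U N ω)
    (hper : IsOnePeriodicProcess U) {lam : ℂ}
    (hlam : IsUnit (algebraMap ℂ (X →L[ℂ] X) lam - U 0 (-1))) (hlam0 : lam ≠ 0)
    (n : ℤ) (t : ℝ) (h1 : (n : ℝ) ≤ t) (h2 : t ≤ (n : ℝ) + 1) :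
    IsUnit (algebraMap ℂ (X →L[ℂ] X) lam - U t (t - 1)) ∧
    resolvent (U t (t - 1)) lam
      = lam⁻¹ • (1 + U t n * resolvent (U 0 (-1)) lam * U (n : ℝ) (t - 1)) := by
  have hAB : U t n * U (n : ℝ) (t - 1) = U t (t - 1) := by
    rw [ContinuousLinearMap.mul_def]
    exact hU.2.1 t n (t - 1) (by linarith) h1
  have hshift : U t (n : ℝ) = U (t - 1) ((n : ℝ) - 1) := by
    have := hper (t - 1) ((n : ℝ) - 1) (by linarith)
    rw [show t - 1 + 1 = t by ring, show (n : ℝ) - 1 + 1 = (n : ℝ) by ring] at this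
    exact this
  have hBA : U (n : ℝ) (t - 1) * U t (n : ℝ) = U 0 (-1) := by
    rw [ContinuousLinearMap.mul_def, hshift, hU.2.1 (n : ℝ) (t - 1) ((n : ℝ) - 1)
      (by linarith) (by linarith)]
    have := aux_shift_int hper n 0 (-1) (by norm_num)
    rw [zero_add, show (-1 : ℝ) + n = (n : ℝ) - 1 by ring] at this
    exact this
  have h := aux_isUnit_and_inverse hlam0 (A := U t n) (B := U (n : ℝ) (t - 1)) (by rw [hBA]; exact hlam)
  rw [hAB] at h
  refine ⟨h.1, ?_⟩
  rw [resolvent, resolvent, h.2, hBA]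

end Auxiliary

open Filter Topology

/-- For a `1`-periodic evolutionary process, if `λ ∈ ρ(M)` and `λ ≠ 0`, then
`λ ∈ ρ(M(t))` for each `t`, and the resolvent `t ↦ R(λ, M(t)) x` is strongly continuous. -/
theorem resolvent_monodromy_strongly_continuous {X : Type*} [NormedAddCommGroup X] [NormedSpace ℂ X] [CompleteSpace X]
    (U : ℝ → ℝ → (X →L[ℂ] X)) (N ω : ℝ)
    (hU : IsEvolutionaryProcess U N ω) (hper : IsOnePeriodicProcess U)
    (lam : ℂ) (hlam : lam ∈ resolventSet ℂ (U 0 (-1))) (hlam0 : lam ≠ 0) :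
    (∀ t : ℝ, lam ∈ resolventSet ℂ (U t (t - 1))) ∧
    (∀ x : X, Continuous fun t : ℝ => resolvent (U t (t - 1)) lam x) := by
  have hlam' : IsUnit (algebraMap ℂ (X →L[ℂ] X) lam - U 0 (-1)) := spectrum.mem_resolventSet_iff.mp hlam
  constructor
  · intro t
    refine spectrum.mem_resolventSet_iff.mpr ?_
    exact (aux_formula hU hper hlam' hlam0 ⌊t⌋ t (Int.floor_le t) (le_of_lt (Int.lt_floor_add_one t))).1
  · intro x
    -- On each interval `[n, n+1]` the resolvent has an explicitly continuous form.
    have hcont : ∀ n : ℤ, ContinuousOn (fun t => resolvent (U t (t - 1)) lam x)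
        (Icc (n : ℝ) ((n : ℝ) + 1)) := by
      intro n
      have hinner : ContinuousOn (fun t => U (n : ℝ) (t - 1) x) (Icc (n : ℝ) ((n : ℝ) + 1)) :=
        aux_strong_cont hU continuousOn_const (by fun_prop) continuousOn_const
          (fun t ht => by have := ht.2; linarith)
      have hR : ContinuousOn (fun t => resolvent (U 0 (-1)) lam (U (n : ℝ) (t - 1) x))
          (Icc (n : ℝ) ((n : ℝ) + 1)) :=
        (resolvent (U 0 (-1)) lam).continuous.comp_continuousOn hinner
      have houter : ContinuousOn
          (fun t => U t (n : ℝ) (resolvent (U 0 (-1)) lam (U (n : ℝ) (t - 1) x)))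
          (Icc (n : ℝ) ((n : ℝ) + 1)) :=
        aux_strong_cont hU (by fun_prop) continuousOn_const hR (fun t ht => ht.1)
      have hrhs : ContinuousOn
          (fun t => lam⁻¹ • (x + U t (n : ℝ) (resolvent (U 0 (-1)) lam (U (n : ℝ) (t - 1) x))))
          (Icc (n : ℝ) ((n : ℝ) + 1)) :=
        (continuousOn_const.add houter).const_smul lam⁻¹
      refine hrhs.congr (fun t ht => ?_)
      rw [(aux_formula hU hper hlam' hlam0 n t ht.1 ht.2).2]
      simp [ContinuousLinearMap.mul_apply]
    rw [continuous_iff_continuousAt]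
    intro t₀
    rcases lt_or_eq_of_le (Int.floor_le t₀) with hlt | heq
    · exact (hcont ⌊t₀⌋).continuousAt (Icc_mem_nhds hlt (Int.lt_floor_add_one t₀))
    · -- `t₀` is an integer: glue left and right continuity.
      rw [continuousAt_iff_continuous_left_right]
      constructor
      · have hc := (hcont (⌊t₀⌋ - 1)) t₀ (by push_cast; constructor <;> linarith)
        refine hc.mono_of_mem_nhdsWithin ?_
        have : Icc (((⌊t₀⌋ : ℝ) - 1)) ((⌊t₀⌋ : ℝ)) ∈ 𝓝[≤] t₀ :=
          Icc_mem_nhdsLE_of_mem ⟨by linarith, by linarith⟩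
        simpa [heq] using this
      · have hc := (hcont ⌊t₀⌋) t₀ ⟨Int.floor_le t₀, le_of_lt (Int.lt_floor_add_one t₀)⟩
        refine hc.mono_of_mem_nhdsWithin ?_
        exact Icc_mem_nhdsGE_of_mem ⟨Int.floor_le t₀, Int.lt_floor_add_one t₀⟩
end
end

section
/- Let (U(t,s))_{t≥s} be a 1-periodic evolutionary process on a complex Banach space X with monodromy operators M(t) = U(t,t−1) and M = M(0). Then the multiplication operator 𝓜 on BC(ℝ,X) defined by (𝓜g)(t) := M(t)g(t) is a well-defined bounded linear operator, and σ(𝓜) \ {0} ⊂ σ(M) \ {0}. -/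
open Set MeasureTheory intervalIntegral
open scoped BoundedContinuousFunction ZeroAtInfty

noncomputable section

section AuxMulOp

variable {X : Type*} [NormedAddCommGroup X] [NormedSpace ℂ X]

open Filter Topology

lemma aux_cont_apply (F : ℝ → X →L[ℂ] X) (g : ℝ → X) (C : ℝ)
    (hF : ∀ x : X, Continuous fun t => F t x) (hC : ∀ t, ‖F t‖ ≤ C)
    (hg : Continuous g) : Continuous fun t => F t (g t) := by
  rw [continuous_iff_continuousAt]
  intro t₀
  have heq : (fun t => F t (g t)) = fun t => F t (g t - g t₀) + F t (g t₀) := by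
    funext t; rw [map_sub]; abel
  rw [heq]
  have h2 : ContinuousAt (fun t => F t (g t₀)) t₀ := (hF (g t₀)).continuousAt
  have h1 : Tendsto (fun t => F t (g t - g t₀)) (𝓝 t₀) (𝓝 0) := by
    refine squeeze_zero_norm (a := fun t => C * ‖g t - g t₀‖) (fun t => ?_) ?_
    · 
      calc ‖F t (g t - g t₀)‖ ≤ ‖F t‖ * ‖g t - g t₀‖ := (F t).le_opNorm _
        _ ≤ C * ‖g t - g t₀‖ :=
          mul_le_mul_of_nonneg_right (hC t) (norm_nonneg _)
    · have h3 : Tendsto (fun t => g t - g t₀) (𝓝 t₀) (𝓝 (g t₀ - g t₀)) :=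
        (hg.tendsto t₀).sub tendsto_const_nhds
      rw [sub_self] at h3
      simpa using h3.norm.const_mul C
  have h5 := h1.add h2
  rw [zero_add] at h5
  unfold ContinuousAt
  simp only [sub_self, map_zero, zero_add]
  exact h5

lemma mulOp_exists (F : ℝ → X →L[ℂ] X) (C : ℝ)
    (hF : ∀ x : X, Continuous fun t => F t x) (hC : ∀ t, ‖F t‖ ≤ C) :
    ∃ T : (ℝ →ᵇ X) →L[ℂ] (ℝ →ᵇ X), ∀ (g : ℝ →ᵇ X) (t : ℝ), T g t = F t (g t) := by
  have hC0 : 0 ≤ C := le_trans (norm_nonneg _) (hC 0)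
  have hbd : ∀ (g : ℝ →ᵇ X) (t : ℝ), ‖F t (g t)‖ ≤ C * ‖g‖ := by
    intro g t
    calc ‖F t (g t)‖ ≤ ‖F t‖ * ‖g t‖ := (F t).le_opNorm _
      _ ≤ C * ‖g‖ := mul_le_mul (hC t) (g.norm_coe_le_norm t) (norm_nonneg _) hC0
  let Tfun : (ℝ →ᵇ X) → (ℝ →ᵇ X) := fun g =>
    BoundedContinuousFunction.ofNormedAddCommGroup (fun t => F t (g t))
      (aux_cont_apply F g C hF hC g.continuous) (C * ‖g‖) (hbd g)
  have hTfun : ∀ (g : ℝ →ᵇ X) (t : ℝ), Tfun g t = F t (g t) := fun g t => rfl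
  let L : (ℝ →ᵇ X) →ₗ[ℂ] (ℝ →ᵇ X) :=
    { toFun := Tfun
      map_add' := by intro g h; ext t; simp [hTfun]
      map_smul' := by intro c g; ext t; simp [hTfun] }
  refine ⟨L.mkContinuous C (fun g => ?_), fun g t => rfl⟩
  exact (BoundedContinuousFunction.norm_le (mul_nonneg hC0 (norm_nonneg g))).mpr (hbd g)

end AuxMulOp

/-- The multiplication operator `(𝓜 g)(t) = M(t) g(t)` by the monodromy operators is a
well-defined bounded linear operator on `BC(ℝ, X)` and `σ(𝓜) \ {0} ⊆ σ(M) \ {0}`. -/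
theorem multiplication_by_monodromy {X : Type*} [NormedAddCommGroup X] [NormedSpace ℂ X] [CompleteSpace X]
    (U : ℝ → ℝ → (X →L[ℂ] X)) (N ω : ℝ)
    (hU : IsEvolutionaryProcess U N ω) (hper : IsOnePeriodicProcess U) :
    ∃ Mop : (ℝ →ᵇ X) →L[ℂ] (ℝ →ᵇ X),
      (∀ (g : ℝ →ᵇ X) (t : ℝ), Mop g t = U t (t - 1) (g t)) ∧
      spectrum ℂ Mop \ {0} ⊆ spectrum ℂ (U 0 (-1)) \ {0} := by
  classical
  obtain ⟨hid, hcoc, hcont, hN, hw, hbound⟩ := hU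
  -- strong continuity of the monodromy family
  have hMcont : ∀ x : X, Continuous fun t => U t (t - 1) x := by
    intro x
    rw [continuous_iff_continuousAt]
    intro t₀
    have hopen : IsOpen {p : ℝ × ℝ | p.2 < p.1} := isOpen_lt continuous_snd continuous_fst
    have hmem : {p : ℝ × ℝ | p.2 ≤ p.1} ∈ nhds ((t₀, t₀ - 1) : ℝ × ℝ) := by
      have hpt : ((t₀, t₀ - 1) : ℝ × ℝ) ∈ {p : ℝ × ℝ | p.2 < p.1} := by
        simp only [Set.mem_setOf_eq]
        linarith
      refine Filter.mem_of_superset (hopen.mem_nhds hpt) ?_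
      intro p hp
      simp only [Set.mem_setOf_eq] at hp ⊢
      exact hp.le
    have h1 : ContinuousAt (fun p : ℝ × ℝ => U p.1 p.2 x) (t₀, t₀ - 1) :=
      (hcont x).continuousAt hmem
    have hc2 : Continuous (fun t : ℝ => ((t, t - 1) : ℝ × ℝ)) := by fun_prop
    exact ContinuousAt.comp' (g := fun p : ℝ × ℝ => U p.1 p.2 x)
      (f := fun t : ℝ => ((t, t - 1) : ℝ × ℝ)) h1 hc2.continuousAt
  have hMbd : ∀ t : ℝ, ‖U t (t - 1)‖ ≤ N * Real.exp ω := by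
    intro t
    have h := hbound t (t - 1) (by linarith)
    have : ω * (t - (t - 1)) = ω := by ring
    rwa [this] at h
  obtain ⟨Mop, hMop⟩ := mulOp_exists (fun t => U t (t - 1)) (N * Real.exp ω) hMcont hMbd
  refine ⟨Mop, hMop, ?_⟩
  intro lam hlam
  obtain ⟨hspec, hne⟩ := hlam
  have hne0 : lam ≠ 0 := by simpa using hne
  refine ⟨?_, hne⟩
  by_contra hM
  have hunit : IsUnit (algebraMap ℂ (X →L[ℂ] X) lam - U 0 (-1)) := spectrum.notMem_iff.mp hM
  obtain ⟨u, hu⟩ := hunit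
  set z : X →L[ℂ] X := algebraMap ℂ (X →L[ℂ] X) lam with hzdef
  set Rl : X →L[ℂ] X := ↑u⁻¹ with hRldef
  have h1 : Rl * (z - U 0 (-1)) = 1 := by rw [← hu]; exact u.inv_mul
  have h2 : (z - U 0 (-1)) * Rl = 1 := by rw [← hu]; exact u.mul_inv
  have hzc : ∀ Y : X →L[ℂ] X, z * Y = Y * z := fun Y => Algebra.commutes lam Y
  -- periodicity on integer intervals
  have per_int : ∀ k : ℤ, U ((k : ℝ) + 1) (k : ℝ) = U 0 (-1) := by
    have base : U 1 0 = U 0 (-1) := by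
      have h := hper 0 (-1) (by norm_num)
      norm_num at h
      exact h
    intro k
    induction k using Int.induction_on with
    | zero => simpa using base
    | succ k ih =>
        have h := hper ((k : ℝ) + 1) (k : ℝ) (by linarith)
        push_cast
        push_cast at ih
        rw [h]
        exact ih
    | pred k ih =>
        have h := hper (-(k : ℝ)) (-(k : ℝ) - 1) (by linarith)
        have h' : U (-(k : ℝ) + 1) (-(k : ℝ)) = U (-(k : ℝ)) (-(k : ℝ) - 1) := by
          have e : -(k : ℝ) - 1 + 1 = -(k : ℝ) := by ring
          rw [e] at h
          exact h
        push_cast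
        push_cast at ih
        have e2 : -(k : ℝ) - 1 + 1 = -(k : ℝ) := by ring
        rw [e2, ← h']
        exact ih
  set r : ℝ → X →L[ℂ] X :=
    fun t => lam⁻¹ • ((1 : X →L[ℂ] X) + U t ((⌊t⌋ : ℤ) : ℝ) * Rl * U (((⌊t⌋ : ℤ) : ℝ) + 1) t)
    with hrdef
  have key : ∀ t : ℝ, r t * (z - U t (t - 1)) = 1 ∧ (z - U t (t - 1)) * r t = 1 := by
    intro t
    set n : ℝ := ((⌊t⌋ : ℤ) : ℝ) with hn
    have hn1 : n ≤ t := Int.floor_le t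
    have hn2 : t ≤ n + 1 := (Int.lt_floor_add_one t).le
    set A : X →L[ℂ] X := U t n with hA
    set B : X →L[ℂ] X := U (n + 1) t with hB
    have hAB : U t (t - 1) = A * B := by
      have c1 : (U t n).comp (U n (t - 1)) = U t (t - 1) := hcoc t n (t - 1) (by linarith) hn1
      have c2 : U (n + 1) t = U n (t - 1) := by
        have h := hper n (t - 1) (by linarith)
        have e : t - 1 + 1 = t := by ring
        rw [e] at h
        exact h
      have : A * B = (U t n).comp (U n (t - 1)) := by rw [hA, hB, c2]; rfl
      rw [this, c1]
    have hBA : B * A = U 0 (-1) := by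
      have c1 : (U (n + 1) t).comp (U t n) = U (n + 1) n := hcoc (n + 1) t n hn1 hn2
      have c2 : U (n + 1) n = U 0 (-1) := per_int ⌊t⌋
      have : B * A = (U (n + 1) t).comp (U t n) := rfl
      rw [this, c1, c2]
    have hrt : r t = lam⁻¹ • ((1 : X →L[ℂ] X) + A * Rl * B) := rfl
    have step1 : ((1 : X →L[ℂ] X) + A * Rl * B) * (z - A * B) = z := by
      have e1 : A * Rl * B * z = A * Rl * (z * B) := by
        rw [mul_assoc (A * Rl) B z, ← hzc B]
      have e2 : A * Rl * (z * B) - A * Rl * B * (A * B) = A * (Rl * (z - B * A)) * B := by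
        noncomm_ring
      calc ((1 : X →L[ℂ] X) + A * Rl * B) * (z - A * B)
          = z - A * B + (A * Rl * B * z - A * Rl * B * (A * B)) := by noncomm_ring
        _ = z - A * B + A * (Rl * (z - B * A)) * B := by rw [e1, e2]
        _ = z - A * B + A * B := by rw [hBA, h1, mul_one]
        _ = z := by noncomm_ring
    have step2 : (z - A * B) * ((1 : X →L[ℂ] X) + A * Rl * B) = z := by
      have e1 : z * (A * Rl * B) = A * z * (Rl * B) := by
        calc z * (A * Rl * B) = z * A * (Rl * B) := by noncomm_ring
          _ = A * z * (Rl * B) := by rw [hzc A]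
      have e2 : A * z * (Rl * B) - A * B * (A * Rl * B) = A * ((z - B * A) * Rl) * B := by
        noncomm_ring
      calc (z - A * B) * ((1 : X →L[ℂ] X) + A * Rl * B)
          = z - A * B + (z * (A * Rl * B) - A * B * (A * Rl * B)) := by noncomm_ring
        _ = z - A * B + A * ((z - B * A) * Rl) * B := by rw [e1, e2]
        _ = z - A * B + A * B := by rw [hBA, h2, mul_one]
        _ = z := by noncomm_ring
    have hlamz : lam⁻¹ • z = 1 := by
      rw [hzdef, Algebra.algebraMap_eq_smul_one, smul_smul, inv_mul_cancel₀ hne0, one_smul]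
    constructor
    · rw [hrt, hAB, smul_mul_assoc, step1, hlamz]
    · rw [hrt, hAB, mul_smul_comm, step2, hlamz]
  -- uniform bound on the pointwise resolvents
  set C : ℝ := ‖lam‖⁻¹ * (1 + (N * Real.exp ω) * ‖Rl‖ * (N * Real.exp ω)) with hCdef
  have hUbd : ∀ t : ℝ, ‖U t ((⌊t⌋ : ℤ) : ℝ)‖ ≤ N * Real.exp ω ∧
      ‖U (((⌊t⌋ : ℤ) : ℝ) + 1) t‖ ≤ N * Real.exp ω := by
    intro t
    have hn1 : ((⌊t⌋ : ℤ) : ℝ) ≤ t := Int.floor_le t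
    have hn2 : t ≤ ((⌊t⌋ : ℤ) : ℝ) + 1 := (Int.lt_floor_add_one t).le
    constructor
    · refine le_trans (hbound t _ hn1) ?_
      have : ω * (t - ((⌊t⌋ : ℤ) : ℝ)) ≤ ω := by nlinarith
      exact mul_le_mul_of_nonneg_left (Real.exp_le_exp.mpr this) hN.le
    · refine le_trans (hbound _ t hn2) ?_
      have : ω * (((⌊t⌋ : ℤ) : ℝ) + 1 - t) ≤ ω := by nlinarith
      exact mul_le_mul_of_nonneg_left (Real.exp_le_exp.mpr this) hN.le
  have hrC : ∀ t : ℝ, ‖r t‖ ≤ C := by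
    intro t
    obtain ⟨hbA, hbB⟩ := hUbd t
    have hnorm : ‖r t‖ ≤ ‖lam‖⁻¹ *
        ‖(1 : X →L[ℂ] X) + U t ((⌊t⌋ : ℤ) : ℝ) * Rl * U (((⌊t⌋ : ℤ) : ℝ) + 1) t‖ := by
      have h4 := norm_smul_le lam⁻¹
        ((1 : X →L[ℂ] X) + U t ((⌊t⌋ : ℤ) : ℝ) * Rl * U (((⌊t⌋ : ℤ) : ℝ) + 1) t)
      rw [norm_inv] at h4
      exact h4
    refine le_trans hnorm ?_
    rw [hCdef]
    apply mul_le_mul_of_nonneg_left _ (by positivity)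
    refine le_trans (norm_add_le _ _) ?_
    have hone : ‖(1 : X →L[ℂ] X)‖ ≤ 1 := ContinuousLinearMap.norm_id_le
    have hmul : ‖U t ((⌊t⌋ : ℤ) : ℝ) * Rl * U (((⌊t⌋ : ℤ) : ℝ) + 1) t‖ ≤
        (N * Real.exp ω) * ‖Rl‖ * (N * Real.exp ω) := by
      refine le_trans (norm_mul_le _ _) ?_
      have h3 : ‖U t ((⌊t⌋ : ℤ) : ℝ) * Rl‖ ≤ (N * Real.exp ω) * ‖Rl‖ := by
        refine le_trans (norm_mul_le _ _) ?_
        exact mul_le_mul_of_nonneg_right hbA (norm_nonneg _)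
      exact mul_le_mul h3 hbB (norm_nonneg _) (by positivity)
    linarith
  have hC0 : 0 ≤ C := le_trans (norm_nonneg _) (hrC 0)
  -- strong continuity of the resolvent family via the resolvent identity
  have hres : ∀ t s : ℝ, r t - r s = r t * (U t (t - 1) - U s (s - 1)) * r s := by
    intro t s
    have k1 := (key t).1
    have k2 := (key s).2
    calc r t - r s
        = r t * ((z - U s (s - 1)) * r s) - r t * (z - U t (t - 1)) * r s := by
          rw [k2, k1, mul_one, one_mul]
      _ = r t * (U t (t - 1) - U s (s - 1)) * r s := by noncomm_ring
  have hrcont : ∀ x : X, Continuous fun t => r t x := by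
    intro x
    rw [continuous_iff_continuousAt]
    intro s
    have hx : Filter.Tendsto (fun t => r t x - r s x) (nhds s) (nhds 0) := by
      refine squeeze_zero_norm
        (a := fun t => C * ‖U t (t - 1) (r s x) - U s (s - 1) (r s x)‖) (fun t => ?_) ?_
      · 
        have he : r t x - r s x = r t ((U t (t - 1) - U s (s - 1)) (r s x)) := by
          have := congrArg (fun T : X →L[ℂ] X => T x) (hres t s)
          simpa using this
        rw [he]
        calc ‖r t ((U t (t - 1) - U s (s - 1)) (r s x))‖
            ≤ ‖r t‖ * ‖(U t (t - 1) - U s (s - 1)) (r s x)‖ := (r t).le_opNorm _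
          _ ≤ C * ‖U t (t - 1) (r s x) - U s (s - 1) (r s x)‖ := by
              rw [ContinuousLinearMap.sub_apply]
              exact mul_le_mul_of_nonneg_right (hrC t) (norm_nonneg _)
      · have h3 : Filter.Tendsto (fun t => U t (t - 1) (r s x)) (nhds s)
            (nhds (U s (s - 1) (r s x))) := (hMcont (r s x)).tendsto s
        have h4 := (h3.sub (tendsto_const_nhds (x := U s (s - 1) (r s x)))).norm.const_mul C
        simpa using h4
    have h5 := Filter.Tendsto.add hx (tendsto_const_nhds (x := r s x))
    rw [zero_add] at h5
    simp only [sub_add_cancel] at h5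
    exact h5
  obtain ⟨Rop, hRop⟩ := mulOp_exists r C hrcont hrC
  have hMopunit : IsUnit (algebraMap ℂ ((ℝ →ᵇ X) →L[ℂ] (ℝ →ᵇ X)) lam - Mop) := by
    refine ⟨⟨algebraMap ℂ ((ℝ →ᵇ X) →L[ℂ] (ℝ →ᵇ X)) lam - Mop, Rop, ?_, ?_⟩, rfl⟩
    · apply ContinuousLinearMap.ext
      intro g
      apply BoundedContinuousFunction.ext
      intro t
      have lhs : ((algebraMap ℂ ((ℝ →ᵇ X) →L[ℂ] (ℝ →ᵇ X)) lam - Mop) * Rop) g t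
          = lam • (r t (g t)) - U t (t - 1) (r t (g t)) := by
        simp [ContinuousLinearMap.mul_apply, Algebra.algebraMap_eq_smul_one, hMop, hRop]
      have rhs : lam • (r t (g t)) - U t (t - 1) (r t (g t))
          = ((z - U t (t - 1)) * r t) (g t) := by
        simp [ContinuousLinearMap.mul_apply, hzdef, Algebra.algebraMap_eq_smul_one]
      rw [lhs, rhs, (key t).2]
      simp
    · apply ContinuousLinearMap.ext
      intro g
      apply BoundedContinuousFunction.ext
      intro t
      have lhs : (Rop * (algebraMap ℂ ((ℝ →ᵇ X) →L[ℂ] (ℝ →ᵇ X)) lam - Mop)) g t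
          = r t (lam • g t - U t (t - 1) (g t)) := by
        simp [ContinuousLinearMap.mul_apply, Algebra.algebraMap_eq_smul_one, hMop, hRop]
      have rhs : r t (lam • g t - U t (t - 1) (g t))
          = (r t * (z - U t (t - 1))) (g t) := by
        simp [ContinuousLinearMap.mul_apply, hzdef, Algebra.algebraMap_eq_smul_one]
      rw [lhs, rhs, (key t).1]
      simp
  exact (spectrum.notMem_iff.mpr hMopunit) hspec
end
end
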